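/- arXiv:1405.2225 — 2 statements merged into one kernel-verified Lean document; each statement's English description precedes it below -/
import Mathlib

section
/- Let Σ be a compatible split system on X such that there exists at least one hierarchical partition system Π₀ with Σ_{Π₀} = Σ, and let Π be a partition system on X with Σ_Π = Σ. Then Π is hierarchical if and only if Π is of minimum size among all partition systems Π' with Σ_{Π'} = Σ (i.e., |Π| ≤ |Π'| for all such Π'). -/
open scoped Classical

/-- A weak X-tree: a finite tree together with a labelling map `lab : X → V`
such that every degree-one vertex (i.e. vertex with a unique neighbour) is labelled. -/
structure WeakXTree (X : Type) [Fintype X] [DecidableEq X] where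
  V : Type
  [fintypeV : Fintype V]
  [decEqV : DecidableEq V]
  G : SimpleGraph V
  isTree : G.IsTree
  lab : X → V
  leaf_labelled : ∀ v : V, (∃! w : V, G.Adj v w) → v ∈ Set.range lab

attribute [instance] WeakXTree.fintypeV WeakXTree.decEqV

variable {X : Type} [Fintype X] [DecidableEq X]

namespace WeakXTree

/-- A leaf is a vertex with a unique neighbour (degree one). -/
def IsLeaf (T : WeakXTree X) (v : T.V) : Prop := ∃! w : T.V, T.G.Adj v w

/-- The split of `X` displayed by an edge `e` of the tree: the (two) sets
`φ⁻¹(V₁)`, `φ⁻¹(V₂)` where `V₁, V₂` are the components of `T ∖ e`. -/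
noncomputable def splitOf (T : WeakXTree X) (e : Sym2 T.V) : Finset (Finset X) :=
  Finset.image (fun u : T.V =>
    Finset.univ.filter (fun x : X => (T.G.deleteEdges {e}).Reachable u (T.lab x)))
    Finset.univ

/-- The multiset of splits displayed by the edges of a weak X-tree. -/
noncomputable def splits (T : WeakXTree X) : Multiset (Finset (Finset X)) :=
  T.G.edgeFinset.val.map T.splitOf

end WeakXTree

/-- A partition of `X`: nonempty parts, every element of `X` in exactly one part. -/
def IsPartition (π : Finset (Finset X)) : Prop :=
  (∀ A ∈ π, A.Nonempty) ∧ ∀ x : X, ∃! A : Finset X, A ∈ π ∧ x ∈ A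

/-- A split of `X` is a partition of `X` into exactly two parts. -/
def IsSplit (σ : Finset (Finset X)) : Prop := IsPartition σ ∧ σ.card = 2

/-- A split system on `X` is a multiset of splits of `X`. -/
def IsSplitSystem (S : Multiset (Finset (Finset X))) : Prop := ∀ σ ∈ S, IsSplit σ

/-- Two splits `{A₁,B₁}` and `{A₂,B₂}` are compatible if one of the four
intersections of a part of one with a part of the other is empty. -/
def SplitsCompatible (σ₁ σ₂ : Finset (Finset X)) : Prop :=
  ∃ A ∈ σ₁, ∃ B ∈ σ₂, A ∩ B = ∅

/-- A split system is compatible if its splits are pairwise compatible. -/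
def CompatibleSystem (S : Multiset (Finset (Finset X))) : Prop :=
  ∀ σ₁ ∈ S, ∀ σ₂ ∈ S, SplitsCompatible σ₁ σ₂

/-- A partition system on `X`: a multiset of partitions of `X` into at least two parts. -/
def IsPartitionSystem (P : Multiset (Finset (Finset X))) : Prop :=
  ∀ π ∈ P, IsPartition π ∧ 2 ≤ π.card

/-- The multiset of splits `{A, X − A}` for `A` a part of the partition `π`. -/
def partitionSplits (π : Finset (Finset X)) : Multiset (Finset (Finset X)) :=
  π.val.map (fun A => ({A, Aᶜ} : Finset (Finset X)))

/-- `Σ_Π`: the multiset union over `π ∈ Π` of the splits `{A, X − A}`, `A ∈ π`. -/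
def systemSplits (P : Multiset (Finset (Finset X))) : Multiset (Finset (Finset X)) :=
  P.bind partitionSplits

/-- A partition system is strongly compatible if any two of its partitions are
equal or have parts whose union is `X`. -/
def StronglyCompatible (P : Multiset (Finset (Finset X))) : Prop :=
  ∀ π₁ ∈ P, ∀ π₂ ∈ P, π₁ = π₂ ∨ ∃ A ∈ π₁, ∃ B ∈ π₂, A ∪ B = Finset.univ

namespace WeakXTree

/-- A weak X-tree is even if all pairwise distances between labelled vertices are even. -/
def IsEven (T : WeakXTree X) : Prop :=
  ∀ x y : X, Even (T.G.dist (T.lab x) (T.lab y))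

/-- A vertex of a weak X-tree is even if it has even distance to some leaf. -/
def EvenVertex (T : WeakXTree X) (v : T.V) : Prop :=
  ∃ l : T.V, T.IsLeaf l ∧ Even (T.G.dist v l)

/-- A set `E` of edges of `T` displays the partition `π` if there is a bijection
`ξ : π → E` with `σ_{ξ(A)} = {A, X − A}` for each part `A ∈ π`. -/
def Displays (T : WeakXTree X) (E : Finset (Sym2 T.V)) (π : Finset (Finset X)) : Prop :=
  ↑E ⊆ T.G.edgeSet ∧ ∃ ξ : Finset X → Sym2 T.V,
    Set.BijOn ξ ↑π ↑E ∧ ∀ A ∈ π, T.splitOf (ξ A) = {A, Aᶜ}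

/-- The partition `π(v)` displayed by a vertex `v`: `x` and `y` are in the same
part iff the path from `φ(x)` to `φ(y)` does not pass through `v`. -/
noncomputable def vertexPartition (T : WeakXTree X) (v : T.V) : Finset (Finset X) :=
  Finset.image (fun x : X => Finset.univ.filter (fun y : X =>
    ∀ p : T.G.Walk (T.lab x) (T.lab y), p.IsPath → v ∉ p.support)) Finset.univ

end WeakXTree

/-- A partition system is hierarchical if the collection of all parts of its
partitions is a hierarchy: any two parts are disjoint or nested. -/
def Hierarchical (P : Multiset (Finset (Finset X))) : Prop :=
  ∀ π₁ ∈ P, ∀ π₂ ∈ P, ∀ A ∈ π₁, ∀ B ∈ π₂,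
    A ∩ B = ∅ ∨ A ∩ B = A ∨ A ∩ B = B

namespace Stmt18Aux

variable {X : Type} [Fintype X] [DecidableEq X]

/-- The multiset of all parts of all partitions of a partition system. -/
def partsOf (P : Multiset (Finset (Finset X))) : Multiset (Finset X) := P.bind Finset.val

lemma mem_partsOf {P : Multiset (Finset (Finset X))} {A : Finset X} :
    A ∈ partsOf P ↔ ∃ π ∈ P, A ∈ π := by
  simp [partsOf, Multiset.mem_bind]

lemma partsOf_map (P : Multiset (Finset (Finset X))) :
    (partsOf P).map (fun A => ({A, Aᶜ} : Finset (Finset X))) = systemSplits P := by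
  simp only [partsOf, systemSplits, partitionSplits, Multiset.map_bind]
  rfl

lemma hier_iff (P : Multiset (Finset (Finset X))) :
    Hierarchical P ↔ ∀ A ∈ partsOf P, ∀ B ∈ partsOf P,
      A ∩ B = ∅ ∨ A ∩ B = A ∨ A ∩ B = B := by
  constructor
  · rintro h A hA B hB
    obtain ⟨π₁, hπ₁, hA⟩ := mem_partsOf.mp hA
    obtain ⟨π₂, hπ₂, hB⟩ := mem_partsOf.mp hB
    exact h π₁ hπ₁ π₂ hπ₂ A hA B hB
  · intro h π₁ hπ₁ π₂ hπ₂ A hA B hB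
    exact h A (mem_partsOf.mpr ⟨π₁, hπ₁, hA⟩) B (mem_partsOf.mpr ⟨π₂, hπ₂, hB⟩)

lemma cnt_partsOf {P : Multiset (Finset (Finset X))} (hP : IsPartitionSystem P) (x : X) :
    Multiset.card ((partsOf P).filter (fun A => x ∈ A)) = Multiset.card P := by
  induction P using Multiset.induction_on with
  | empty => simp [partsOf]
  | cons π P ih =>
    have hπ : IsPartition π := (hP π (Multiset.mem_cons_self _ _)).1
    have hP' : IsPartitionSystem P := fun ρ hρ => hP ρ (Multiset.mem_cons_of_mem hρ)
    obtain ⟨A, hA, hu⟩ := hπ.2 x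
    have hfil : π.filter (fun B => x ∈ B) = {A} := by
      apply Finset.eq_singleton_iff_unique_mem.mpr
      refine ⟨Finset.mem_filter.mpr ⟨hA.1, hA.2⟩, ?_⟩
      intro B hB
      exact hu B ⟨(Finset.mem_filter.mp hB).1, (Finset.mem_filter.mp hB).2⟩
    have hbind : partsOf (π ::ₘ P) = π.val + partsOf P := Multiset.cons_bind _ _ _
    rw [hbind, Multiset.filter_add, Multiset.card_add, ih hP', Multiset.card_cons]
    have hval : Multiset.filter (fun B => x ∈ B) π.val
        = (Finset.filter (fun B => x ∈ B) π).val := rfl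
    rw [hval, hfil]
    simp only [Finset.singleton_val, Multiset.card_singleton]
    omega

lemma part_facts {P : Multiset (Finset (Finset X))} (hP : IsPartitionSystem P)
    {A : Finset X} (hA : A ∈ partsOf P) : A.Nonempty ∧ A ≠ Finset.univ := by
  obtain ⟨π, hπ, hAπ⟩ := mem_partsOf.mp hA
  obtain ⟨hpart, hcard⟩ := hP π hπ
  refine ⟨hpart.1 A hAπ, ?_⟩
  have hcard1 : 1 < π.card := by omega
  obtain ⟨B, hB, hBA⟩ := Finset.exists_mem_ne hcard1 A
  obtain ⟨y, hy⟩ := hpart.1 B hB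
  intro hu
  have hyA : y ∈ A := by rw [hu]; exact Finset.mem_univ y
  obtain ⟨C, hC, huniq⟩ := hpart.2 y
  exact hBA (by rw [huniq B ⟨hB, hy⟩, huniq A ⟨hAπ, hyA⟩])

lemma compl_ne (x₀ : X) (A : Finset X) : A ≠ Aᶜ := by
  intro h
  by_cases hx : x₀ ∈ A
  · have h2 : x₀ ∈ Aᶜ := h ▸ hx
    exact (Finset.mem_compl.mp h2) hx
  · have h2 : x₀ ∈ Aᶜ := Finset.mem_compl.mpr hx
    rw [← h] at h2
    exact hx h2

lemma pair_eq_iff (A B : Finset X) :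
    ({A, Aᶜ} : Finset (Finset X)) = {B, Bᶜ} ↔ B = A ∨ B = Aᶜ := by
  constructor
  · intro h
    have hB : B ∈ ({B, Bᶜ} : Finset (Finset X)) := by simp
    rw [← h] at hB
    simpa using hB
  · rintro (rfl | rfl)
    · rfl
    · rw [compl_compl]
      exact Finset.pair_comm _ _

lemma card_filter_eq (s : Multiset (Finset X)) (A : Finset X) :
    Multiset.card (s.filter (fun B => B = A)) = s.count A := by
  induction s using Multiset.induction_on with
  | empty => simp
  | cons a s ih =>
    by_cases h : a = A
    · subst h
      simp [Multiset.filter_cons, Multiset.count_cons, ih]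
    · simp [Multiset.filter_cons, Multiset.count_cons, h, ih, Ne.symm h]

lemma card_filter_disj_le (s : Multiset (Finset X)) (p q : Finset X → Prop)
    [DecidablePred p] [DecidablePred q]
    (h : ∀ a ∈ s, ¬ (p a ∧ q a)) :
    Multiset.card (s.filter p) + Multiset.card (s.filter q) ≤ Multiset.card s := by
  induction s using Multiset.induction_on with
  | empty => simp
  | cons a s ih =>
    have ha := h a (Multiset.mem_cons_self a s)
    have ih' := ih (fun b hb => h b (Multiset.mem_cons_of_mem hb))
    by_cases hp : p a
    · have hq : ¬ q a := fun hq => ha ⟨hp, hq⟩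
      simp only [Multiset.filter_cons_of_pos _ hp, Multiset.filter_cons_of_neg _ hq,
        Multiset.card_cons, Multiset.card_singleton]
      omega
    · by_cases hq : q a
      · simp only [Multiset.filter_cons_of_neg _ hp, Multiset.filter_cons_of_pos _ hq,
          Multiset.card_cons, Multiset.card_singleton]
        omega
      · simp only [Multiset.filter_cons_of_neg _ hp, Multiset.filter_cons_of_neg _ hq,
          Multiset.card_cons]
        omega

lemma card_filter_or (s : Multiset (Finset X)) (p q : Finset X → Prop)
    [DecidablePred p] [DecidablePred q]
    (h : ∀ a ∈ s, ¬ (p a ∧ q a)) :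
    Multiset.card (s.filter (fun a => p a ∨ q a))
      = Multiset.card (s.filter p) + Multiset.card (s.filter q) := by
  induction s using Multiset.induction_on with
  | empty => simp
  | cons a s ih =>
    have ha := h a (Multiset.mem_cons_self a s)
    have ih' := ih (fun b hb => h b (Multiset.mem_cons_of_mem hb))
    by_cases hp : p a
    · have hq : ¬ q a := fun hq => ha ⟨hp, hq⟩
      simp [Multiset.filter_cons, hp, hq, ih'] <;> omega
    · by_cases hq : q a
      · simp [Multiset.filter_cons, hp, hq, ih'] <;> omega
      · simp [Multiset.filter_cons, hp, hq, ih'] <;> omega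

lemma card_filter_pair (s : Multiset (Finset X)) (A C : Finset X) (hAC : A ≠ C) :
    Multiset.card (s.filter (fun B => B = A ∨ B = C)) = s.count A + s.count C := by
  have h := card_filter_or s (fun B => B = A) (fun B => B = C)
    (by rintro B _ ⟨rfl, rfl⟩; exact hAC rfl)
  rw [card_filter_eq, card_filter_eq] at h
  exact h

lemma card_filter_map_compl (s : Multiset (Finset X)) (z : X) :
    Multiset.card ((s.map (fun A => Aᶜ)).filter (fun A => z ∈ A))
      = Multiset.card (s.filter (fun A => z ∉ A)) := by
  induction s using Multiset.induction_on with
  | empty => simp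
  | cons a s ih =>
    by_cases h : z ∈ a <;>
      simp [Multiset.filter_cons, Multiset.map_cons, Finset.mem_compl, h, ih]

/-- In a laminar family, the sets containing a given point have a maximum. -/
lemma exists_top (F : Multiset (Finset X))
    (hlam : ∀ A ∈ F, ∀ B ∈ F, A ∩ B = ∅ ∨ A ∩ B = A ∨ A ∩ B = B)
    (x₀ : X) (hpos : F.filter (fun A => x₀ ∈ A) ≠ 0) :
    ∃ C₁ ∈ F, x₀ ∈ C₁ ∧ ∀ S ∈ F, x₀ ∈ S → S ⊆ C₁ := by
  have hne : ((F.filter (fun A => x₀ ∈ A)).toFinset).Nonempty := by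
    obtain ⟨A, hA⟩ := Multiset.exists_mem_of_ne_zero hpos
    exact ⟨A, Multiset.mem_toFinset.mpr hA⟩
  obtain ⟨C₁, hC₁mem, hC₁max'⟩ := Finset.exists_maximal hne
  have hC₁max : ∀ S ∈ (F.filter (fun A => x₀ ∈ A)).toFinset, ¬ C₁ < S :=
    fun S hS hlt => lt_irrefl _ (lt_of_lt_of_le hlt (hC₁max' hS hlt.le))
  have hC₁F : C₁ ∈ F := (Multiset.mem_filter.mp (Multiset.mem_toFinset.mp hC₁mem)).1
  have hxC₁ : x₀ ∈ C₁ := (Multiset.mem_filter.mp (Multiset.mem_toFinset.mp hC₁mem)).2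
  refine ⟨C₁, hC₁F, hxC₁, ?_⟩
  intro S hS hxS
  rcases hlam C₁ hC₁F S hS with h | h | h
  · exfalso
    have : x₀ ∈ C₁ ∩ S := Finset.mem_inter.mpr ⟨hxC₁, hxS⟩
    rw [h] at this
    exact absurd this (Finset.notMem_empty x₀)
  · have hCS : C₁ ⊆ S := Finset.inter_eq_left.mp h
    have hSmem : S ∈ (F.filter (fun A => x₀ ∈ A)).toFinset :=
      Multiset.mem_toFinset.mpr (Multiset.mem_filter.mpr ⟨hS, hxS⟩)
    have hnlt := hC₁max S hSmem
    have : S = C₁ := by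
      by_contra hne'
      exact hnlt (lt_of_le_of_ne hCS (Ne.symm hne'))
    rw [this]
  · exact Finset.inter_eq_right.mp h

lemma laminar_lower (x₀ : X) (F : Multiset (Finset X))
    (hproper : ∀ A ∈ F, A ≠ Finset.univ)
    (hlam : ∀ A ∈ F, ∀ B ∈ F, A ∩ B = ∅ ∨ A ∩ B = A ∨ A ∩ B = B)
    (d : ℕ) (hd : ∀ z : X, Multiset.card (F.filter (fun A => z ∈ A)) = d) :
    2 * d ≤ Multiset.card F := by
  rcases Nat.eq_zero_or_pos d with h0 | hpos
  · omega
  have hfne : F.filter (fun A => x₀ ∈ A) ≠ 0 := by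
    intro h
    have := hd x₀
    rw [h] at this
    simp at this
    omega
  obtain ⟨C₁, hC₁F, hxC₁, hmax⟩ := exists_top F hlam x₀ hfne
  obtain ⟨y, hy⟩ : ∃ y, y ∉ C₁ := by
    by_contra h
    push_neg at h
    exact hproper C₁ hC₁F (Finset.eq_univ_iff_forall.mpr h)
  have hdisj : ∀ A ∈ F, ¬ ((x₀ ∈ A) ∧ (y ∈ A)) := by
    rintro A hA ⟨h1, h2⟩
    exact hy (hmax A hA h1 h2)
  have hsum := card_filter_disj_le F (fun A => x₀ ∈ A) (fun A => y ∈ A) hdisj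
  rw [hd x₀, hd y] at hsum
  omega

lemma laminar_rigid (F : Multiset (Finset X))
    (hne : ∀ A ∈ F, A.Nonempty)
    (hproper : ∀ A ∈ F, A ≠ Finset.univ)
    (hlam : ∀ A ∈ F, ∀ B ∈ F, A ∩ B = ∅ ∨ A ∩ B = A ∨ A ∩ B = B)
    (hcompl : ∀ A ∈ F, Aᶜ ∉ F)
    (d : ℕ) (hd : ∀ z : X, Multiset.card (F.filter (fun A => z ∈ A)) = d)
    (hcard : Multiset.card F = 2 * d) : F = 0 := by
  by_contra hF
  obtain ⟨A₀, hA₀⟩ := Multiset.exists_mem_of_ne_zero hF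
  obtain ⟨x₀, hx₀⟩ := hne A₀ hA₀
  have hdpos : 1 ≤ d := by
    have hm : A₀ ∈ F.filter (fun A => x₀ ∈ A) := Multiset.mem_filter.mpr ⟨hA₀, hx₀⟩
    have := hd x₀
    have hpos : 0 < Multiset.card (F.filter (fun A => x₀ ∈ A)) :=
      Multiset.card_pos.mpr (fun h => by rw [h] at hm; exact absurd hm (Multiset.notMem_zero _))
    omega
  have hfne : F.filter (fun A => x₀ ∈ A) ≠ 0 := by
    intro h
    have := hd x₀
    rw [h] at this
    simp at this
    omega
  obtain ⟨C₁, hC₁F, hxC₁, hmax⟩ := exists_top F hlam x₀ hfne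
  obtain ⟨y, hy⟩ : ∃ y, y ∉ C₁ := by
    by_contra h
    push_neg at h
    exact hproper C₁ hC₁F (Finset.eq_univ_iff_forall.mpr h)
  have hdisj : ∀ A ∈ F, ¬ ((x₀ ∈ A) ∧ (y ∈ A)) := by
    rintro A hA ⟨h1, h2⟩
    exact hy (hmax A hA h1 h2)
  have hcover : ∀ A ∈ F, x₀ ∈ A ∨ y ∈ A := by
    intro A hA
    by_contra hAc
    push_neg at hAc
    obtain ⟨t, rfl⟩ := Multiset.exists_cons_of_mem hA
    have hdisj' : ∀ B ∈ t, ¬ ((x₀ ∈ B) ∧ (y ∈ B)) :=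
      fun B hB => hdisj B (Multiset.mem_cons_of_mem hB)
    have hsum := card_filter_disj_le t (fun A => x₀ ∈ A) (fun A => y ∈ A) hdisj'
    have h1 := hd x₀
    have h2 := hd y
    rw [Multiset.filter_cons_of_neg (p := fun B => x₀ ∈ B) t hAc.1] at h1
    rw [Multiset.filter_cons_of_neg (p := fun B => y ∈ B) t hAc.2] at h2
    have hc := hcard
    rw [Multiset.card_cons] at hc
    omega
  have claim3 : ∀ S ∈ F, y ∈ S → S ∩ C₁ = ∅ := by
    intro S hS hyS
    rcases hlam S hS C₁ hC₁F with h | h | h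
    · exact h
    · exact absurd (Finset.inter_eq_left.mp h hyS) hy
    · have h1 : C₁ ⊆ S := Finset.inter_eq_right.mp h
      have h2 : S ⊆ C₁ := hmax S hS (h1 hxC₁)
      exact absurd (h2 hyS) hy
  have claim4 : ∀ z, z ∉ C₁ → ∀ S ∈ F, y ∈ S → z ∈ S := by
    intro z hz
    have hfe : F.filter (fun A => z ∈ A) = F.filter (fun A => z ∈ A ∧ y ∈ A) := by
      apply Multiset.filter_congr
      intro A hA
      constructor
      · intro hzA
        refine ⟨hzA, ?_⟩
        rcases hcover A hA with h | h
        · exact absurd (hmax A hA h hzA) hz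
        · exact h
      · exact And.left
    have heq1 : F.filter (fun A => z ∈ A ∧ y ∈ A)
        = (F.filter (fun A => y ∈ A)).filter (fun A => z ∈ A) := by
      rw [Multiset.filter_filter]
    have h1 : (F.filter (fun A => y ∈ A)).filter (fun A => z ∈ A)
        ≤ F.filter (fun A => y ∈ A) := Multiset.filter_le _ _
    have h2 : (F.filter (fun A => y ∈ A)).filter (fun A => z ∈ A)
        = F.filter (fun A => y ∈ A) := by
      apply Multiset.eq_of_le_of_card_le h1
      rw [← heq1, ← hfe, hd z, hd y]
    intro S hS hyS
    have hSm : S ∈ F.filter (fun A => y ∈ A) := Multiset.mem_filter.mpr ⟨hS, hyS⟩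
    rw [← h2] at hSm
    exact (Multiset.mem_filter.mp hSm).2
  obtain ⟨S, hSf⟩ : ∃ S, S ∈ F.filter (fun A => y ∈ A) := by
    apply Multiset.exists_mem_of_ne_zero
    intro h
    have := hd y
    rw [h] at this
    simp at this
    omega
  have hSF : S ∈ F := (Multiset.mem_filter.mp hSf).1
  have hyS : y ∈ S := (Multiset.mem_filter.mp hSf).2
  have hSC : S = C₁ᶜ := by
    ext z
    rw [Finset.mem_compl]
    constructor
    · intro hzS hzC
      have h3 := claim3 S hSF hyS
      have h4 : z ∈ S ∩ C₁ := Finset.mem_inter.mpr ⟨hzS, hzC⟩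
      rw [h3] at h4
      exact absurd h4 (Finset.notMem_empty z)
    · intro hz
      exact claim4 z hz S hSF hyS
  exact hcompl C₁ hC₁F (hSC ▸ hSF)

lemma core (x₀ : X) (P₀ P : Multiset (Finset (Finset X)))
    (h₀ : IsPartitionSystem P₀) (hH : Hierarchical P₀)
    (hP : IsPartitionSystem P)
    (hmap : systemSplits P = systemSplits P₀) :
    Multiset.card P₀ ≤ Multiset.card P ∧
      (Multiset.card P ≤ Multiset.card P₀ → partsOf P = partsOf P₀) := by
  classical
  set f : Finset X → Finset (Finset X) := fun A => {A, Aᶜ} with hf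
  have hm : (partsOf P).map f = (partsOf P₀).map f := by
    rw [partsOf_map, partsOf_map, hmap]
  set PP := partsOf P with hPP
  set QQ := partsOf P₀ with hQQ
  set P' := PP - QQ with hP'
  set Q' := QQ - PP with hQ'
  set I := PP ∩ QQ with hI
  have hP1 : I + P' = PP := by
    ext A
    simp only [Multiset.count_add, hI, hP', Multiset.count_inter, Multiset.count_sub]
    omega
  have hP2 : I + Q' = QQ := by
    ext A
    simp only [Multiset.count_add, hI, hQ', Multiset.count_inter, Multiset.count_sub]
    omega
  have hmap' : P'.map f = Q'.map f := by
    have h1 : (I + P').map f = (I + Q').map f := by rw [hP1, hP2]; exact hm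
    rw [Multiset.map_add, Multiset.map_add] at h1
    exact add_left_cancel h1
  have hdisjcnt : ∀ A : Finset X, P'.count A = 0 ∨ Q'.count A = 0 := by
    intro A
    simp only [hP', hQ', Multiset.count_sub]
    omega
  have hcmap : ∀ (M : Multiset (Finset X)) (A : Finset X),
      Multiset.count (f A) (M.map f) = M.count A + M.count Aᶜ := by
    intro M A
    rw [Multiset.count_map]
    have hfe : M.filter (fun B => f A = f B) = M.filter (fun B => B = A ∨ B = Aᶜ) := by
      apply Multiset.filter_congr
      intro B _
      constructor
      · intro h
        exact (pair_eq_iff A B).mp h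
      · intro h
        exact (pair_eq_iff A B).mpr h
    rw [hfe, card_filter_pair M A Aᶜ (compl_ne x₀ A)]
  have hkey : ∀ A : Finset X, P'.count A = Q'.count Aᶜ := by
    intro A
    have e1 : Multiset.count (f A) (P'.map f) = Multiset.count (f A) (Q'.map f) := by
      rw [hmap']
    rw [hcmap P' A, hcmap Q' A] at e1
    have d1 := hdisjcnt A
    have d2 := hdisjcnt Aᶜ
    omega
  have hinj : Function.Injective (fun A : Finset X => Aᶜ) := fun a b h => by
    simpa using congrArg (fun C : Finset X => Cᶜ) h
  have hPQ : P' = Q'.map (fun A => Aᶜ) := by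
    ext A
    have h1 : Multiset.count A (Q'.map (fun A => Aᶜ)) = Q'.count Aᶜ := by
      have h2 := Multiset.count_map_eq_count' (fun A : Finset X => Aᶜ) Q' hinj Aᶜ
      simpa using h2
    rw [h1, hkey]
  set t := Multiset.card Q' with htd
  have hcnt : ∀ z : X, Multiset.card (PP.filter (fun A => z ∈ A)) = Multiset.card P :=
    fun z => cnt_partsOf hP z
  have hcnt0 : ∀ z : X, Multiset.card (QQ.filter (fun A => z ∈ A)) = Multiset.card P₀ :=
    fun z => cnt_partsOf h₀ z
  have hiden : ∀ z : X, Multiset.card P + 2 * Multiset.card (Q'.filter (fun A => z ∈ A))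
      = Multiset.card P₀ + t := by
    intro z
    have s1 : Multiset.card (PP.filter (fun A => z ∈ A))
        = Multiset.card (I.filter (fun A => z ∈ A))
          + Multiset.card (P'.filter (fun A => z ∈ A)) := by
      rw [← hP1, Multiset.filter_add, Multiset.card_add]
    have s2 : Multiset.card (QQ.filter (fun A => z ∈ A))
        = Multiset.card (I.filter (fun A => z ∈ A))
          + Multiset.card (Q'.filter (fun A => z ∈ A)) := by
      rw [← hP2, Multiset.filter_add, Multiset.card_add]
    have s3 : Multiset.card (P'.filter (fun A => z ∈ A))
        = Multiset.card (Q'.filter (fun A => z ∉ A)) := by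
      rw [hPQ]
      exact card_filter_map_compl Q' z
    have s4 : Multiset.card (Q'.filter (fun A => z ∈ A))
        + Multiset.card (Q'.filter (fun A => z ∉ A)) = t := by
      rw [← Multiset.card_add, Multiset.filter_add_not]
    have h1 := hcnt z
    have h2 := hcnt0 z
    omega
  set d := Multiset.card (Q'.filter (fun A => x₀ ∈ A)) with hdd
  have hdconst : ∀ z : X, Multiset.card (Q'.filter (fun A => z ∈ A)) = d := by
    intro z
    have e1 := hiden z
    have e2 := hiden x₀
    omega
  have hQ'le : Q' ≤ QQ := tsub_le_self
  have hQ'mem : ∀ A ∈ Q', A ∈ QQ := fun A hA => Multiset.mem_of_le hQ'le hA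
  have hproper : ∀ A ∈ Q', A ≠ Finset.univ :=
    fun A hA => (part_facts h₀ (hQ'mem A hA)).2
  have hlamQ : ∀ A ∈ Q', ∀ B ∈ Q', A ∩ B = ∅ ∨ A ∩ B = A ∨ A ∩ B = B :=
    fun A hA B hB => (hier_iff P₀).mp hH A (hQ'mem A hA) B (hQ'mem B hB)
  have hlow := laminar_lower x₀ Q' hproper hlamQ d hdconst
  constructor
  · have := hiden x₀
    omega
  · intro hle
    have hteq : Multiset.card Q' = 2 * d := by
      have := hiden x₀
      omega
    have hnonempty : ∀ A ∈ Q', A.Nonempty := fun A hA => (part_facts h₀ (hQ'mem A hA)).1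
    have hcomplQ : ∀ A ∈ Q', Aᶜ ∉ Q' := by
      intro A hA hA'
      have h1 : 1 ≤ P'.count A := by
        rw [hkey]
        exact Multiset.count_pos.mpr hA'
      have h2 : 1 ≤ Q'.count A := Multiset.count_pos.mpr hA
      rcases hdisjcnt A with h | h <;> omega
    have hQ0 := laminar_rigid Q' hnonempty hproper hlamQ hcomplQ d hdconst hteq
    have hP0 : P' = 0 := by rw [hPQ, hQ0]; rfl
    show PP = QQ
    rw [← hP1, ← hP2, hQ0, hP0]

end Stmt18Aux


/-- if some hierarchical partition system realises the compatible
split system `Σ`, then a partition system `Π` with `Σ_Π = Σ` is hierarchical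
iff it is of minimum size among all partition systems realising `Σ`. -/
theorem stmt_18 {X : Type} [Fintype X] [DecidableEq X] (hX : 2 ≤ Fintype.card X)
    (S : Multiset (Finset (Finset X))) (hS : IsSplitSystem S)
    (hcomp : CompatibleSystem S)
    (hexists : ∃ P₀ : Multiset (Finset (Finset X)),
      IsPartitionSystem P₀ ∧ Hierarchical P₀ ∧ systemSplits P₀ = S)
    (P : Multiset (Finset (Finset X))) (hP : IsPartitionSystem P)
    (hPS : systemSplits P = S) :
    Hierarchical P ↔
      ∀ P' : Multiset (Finset (Finset X)), IsPartitionSystem P' →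
        systemSplits P' = S → Multiset.card P ≤ Multiset.card P' := by
  have hXne : Nonempty X := Fintype.card_pos_iff.mp (by omega)
  obtain ⟨x₀⟩ := hXne
  constructor
  · intro hPH P' hP' hP'S
    exact (Stmt18Aux.core x₀ P P' hP hPH hP' (by rw [hP'S, hPS])).1
  · intro hmin
    obtain ⟨P₀, h₀, hH₀, hS₀⟩ := hexists
    have hc := Stmt18Aux.core x₀ P₀ P h₀ hH₀ hP (by rw [hPS, hS₀])
    have hpe := hc.2 (hmin P₀ h₀ hS₀)
    rw [Stmt18Aux.hier_iff, hpe]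
    exact (Stmt18Aux.hier_iff P₀).mp hH₀
end

section
/- Let G be a simple cubic graph with vertex set V, |V| ≥ 5, and edge set E. Let X = V and let Σ be the split system on X consisting of the splits {{u,v}, X−{u,v}} for each edge {u,v} ∈ E, each with multiplicity one. Then there exists a partition system Π on X with Σ_Π = Σ if and only if E can be partitioned into three perfect matchings of G. -/
open scoped Classical

variable {X : Type} [Fintype X] [DecidableEq X]

section Stmt19Aux

variable {V : Type} [Fintype V] [DecidableEq V]

noncomputable def eVS (e : Sym2 V) : Finset V := Finset.univ.filter (fun v : V => v ∈ e)

noncomputable def fE (e : Sym2 V) : Finset (Finset V) := {eVS e, (eVS e)ᶜ}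

lemma mem_eVS {e : Sym2 V} {v : V} : v ∈ eVS e ↔ v ∈ e := by simp [eVS]

lemma eVS_card {e : Sym2 V} (hd : ¬ e.IsDiag) : (eVS e).card = 2 := by
  induction e using Sym2.ind with
  | _ a b =>
    rw [Sym2.mk_isDiag_iff] at hd
    have h : eVS s(a,b) = {a, b} := by
      ext x; simp [mem_eVS, Sym2.mem_iff]
    rw [h, Finset.card_insert_of_notMem (by simp [hd]), Finset.card_singleton]

lemma eVS_compl_card {e : Sym2 V} (hd : ¬ e.IsDiag) :
    ((eVS e)ᶜ).card = Fintype.card V - 2 := by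
  rw [Finset.card_compl, eVS_card hd]

lemma eVS_inj {e₁ e₂ : Sym2 V} (hd : ¬ e₁.IsDiag) (h : eVS e₁ = eVS e₂) : e₁ = e₂ := by
  induction e₁ using Sym2.ind with
  | _ a b =>
  induction e₂ using Sym2.ind with
  | _ c d =>
    rw [Sym2.mk_isDiag_iff] at hd
    have ha : a ∈ s(c,d) := mem_eVS.mp (h ▸ mem_eVS.mpr (by simp))
    have hb : b ∈ s(c,d) := mem_eVS.mp (h ▸ mem_eVS.mpr (by simp))
    rw [Sym2.mem_iff] at ha hb
    rw [Sym2.eq_iff]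
    rcases ha with rfl | rfl <;> rcases hb with rfl | rfl <;> tauto

lemma countP_bind' {α β : Type*} (s : Multiset α) (f : α → Multiset β) (p : β → Prop)
    [DecidablePred p] :
    Multiset.countP p (s.bind f) = (s.map (fun a => Multiset.countP p (f a))).sum := by
  induction s using Multiset.induction with
  | empty => simp
  | cons a s ih => simp [Multiset.cons_bind, ih]

end Stmt19Aux

/-- for a simple cubic graph `G` on at least 5 vertices, the split
system `Σ = {{u,v} | X − {u,v} : {u,v} ∈ E}` is realised by some partition
system iff the edge set of `G` can be partitioned into three perfect
matchings. -/
theorem stmt_19 {V : Type} [Fintype V] [DecidableEq V] (G : SimpleGraph V)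
    [DecidableRel G.Adj] (hcard : 5 ≤ Fintype.card V)
    (hcubic : ∀ v : V, G.degree v = 3) :
    (∃ P : Multiset (Finset (Finset V)), IsPartitionSystem P ∧
        systemSplits P = G.edgeFinset.val.map (fun e =>
          ({Finset.univ.filter (fun v : V => v ∈ e),
            (Finset.univ.filter (fun v : V => v ∈ e))ᶜ} : Finset (Finset V)))) ↔
      ∃ M₁ M₂ M₃ : Finset (Sym2 V),
        M₁ ∪ M₂ ∪ M₃ = G.edgeFinset ∧
        Disjoint M₁ M₂ ∧ Disjoint M₁ M₃ ∧ Disjoint M₂ M₃ ∧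
        (∀ v : V, ∃! e : Sym2 V, e ∈ M₁ ∧ v ∈ e) ∧
        (∀ v : V, ∃! e : Sym2 V, e ∈ M₂ ∧ v ∈ e) ∧
        (∀ v : V, ∃! e : Sym2 V, e ∈ M₃ ∧ v ∈ e) := by
  have hnd : ∀ e ∈ G.edgeFinset, ¬ e.IsDiag := fun e he =>
    (G.not_isDiag_of_mem_edgeSet (SimpleGraph.mem_edgeFinset.mp he))
  constructor
  · rintro ⟨P, hPsys, hPmul⟩
    have hPs : systemSplits P = G.edgeFinset.val.map fE := hPmul
    -- every element of the mapped multiset has multiplicity at most 1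
    have hcount1 : ∀ σ : Finset (Finset V),
        Multiset.count σ (G.edgeFinset.val.map fE) ≤ 1 := by
      have hnodup : (G.edgeFinset.val.map fE).Nodup := by
        refine Multiset.Nodup.map_on ?_ G.edgeFinset.nodup
        intro e₁ h₁ e₂ h₂ hfe
        rw [Finset.mem_val] at h₁ h₂
        have h2a : (eVS e₁).card = 2 := eVS_card (hnd _ h₁)
        have hmem : eVS e₁ ∈ fE e₂ := hfe ▸ (Finset.mem_insert_self _ _)
        rcases Finset.mem_insert.mp hmem with h | h
        · exact eVS_inj (hnd _ h₁) h
        · exfalso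
          rw [Finset.mem_singleton] at h
          have hc := eVS_compl_card (hnd _ h₂)
          rw [← h, h2a] at hc
          omega
      exact fun σ => Multiset.nodup_iff_count_le_one.mp hnodup σ
    -- every part of every partition is an edge set or the complement of one
    have hweak : ∀ π ∈ P, ∀ A ∈ π, ∃ e ∈ G.edgeFinset, A = eVS e ∨ A = (eVS e)ᶜ := by
      intro π hπ A hA
      have h1 : ({A, Aᶜ} : Finset (Finset V)) ∈ partitionSplits π :=
        Multiset.mem_map_of_mem _ (Finset.mem_val.mpr hA)
      have h2 : ({A, Aᶜ} : Finset (Finset V)) ∈ systemSplits P :=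
        Multiset.mem_of_le (Multiset.le_bind P hπ) h1
      rw [hPs] at h2
      obtain ⟨e, he, hfe⟩ := Multiset.mem_map.mp h2
      rw [Finset.mem_val] at he
      refine ⟨e, he, ?_⟩
      have hmem : A ∈ fE e := by rw [hfe]; exact Finset.mem_insert_self _ _
      rcases Finset.mem_insert.mp hmem with h | h
      · exact Or.inl h
      · exact Or.inr (Finset.mem_singleton.mp h)
    -- in fact every part is an edge set
    have hstrong : ∀ π ∈ P, ∀ A ∈ π, ∃ e ∈ G.edgeFinset, A = eVS e := by
      intro π hπ A hA
      obtain ⟨e, he, hAe⟩ := hweak π hπ A hA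
      rcases hAe with h | h
      · exact ⟨e, he, h⟩
      exfalso
      obtain ⟨hπp, hπ2⟩ := hPsys π hπ
      obtain ⟨B, hB, hBA⟩ := Finset.exists_mem_ne (s := π) (by omega) A
      have hdisj : ∀ x ∈ B, x ∉ A := by
        intro x hxB hxA
        exact hBA ((hπp.2 x).unique ⟨hB, hxB⟩ ⟨hA, hxA⟩)
      have hBsub : B ⊆ eVS e := by
        intro x hx
        have hx' := hdisj x hx
        rw [h] at hx'
        simpa using hx'
      have hBcard : B.card ≤ 2 :=
        le_trans (Finset.card_le_card hBsub) (le_of_eq (eVS_card (hnd e he)))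
      obtain ⟨e', he', hBe⟩ := hweak π hπ B hB
      have hBeq : B = eVS e := by
        rcases hBe with h' | h'
        · apply Finset.eq_of_subset_of_card_le hBsub
          rw [eVS_card (hnd e he), h', eVS_card (hnd e' he')]
        · exfalso
          rw [h', eVS_compl_card (hnd e' he')] at hBcard
          omega
      have hAB : A = Bᶜ := by rw [hBeq, h]
      set σ : Finset (Finset V) := {A, Aᶜ} with hσ
      have hσB : σ = {B, Bᶜ} := by rw [hσ, hAB, compl_compl, Finset.pair_comm]
      have h2le : 2 ≤ Multiset.count σ (partitionSplits π) := by
        have hc : Multiset.count σ (partitionSplits π)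
            = (π.filter (fun C : Finset V => σ = ({C, Cᶜ} : Finset (Finset V)))).card := by
          rw [partitionSplits, Multiset.count_map]
          rfl
        rw [hc]
        refine Finset.one_lt_card.mpr ⟨A, ?_, B, ?_, hBA.symm⟩
        · exact Finset.mem_filter.mpr ⟨hA, rfl⟩
        · exact Finset.mem_filter.mpr ⟨hB, hσB⟩
      have hge : 2 ≤ Multiset.count σ (systemSplits P) :=
        le_trans h2le (Multiset.count_le_of_le σ (Multiset.le_bind P hπ))
      rw [hPs] at hge
      have := hcount1 σ
      omega
    -- each partition gives a perfect matching
    have hmatch : ∀ π ∈ P, ∀ v : V,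
        ∃! e : Sym2 V, e ∈ G.edgeFinset.filter (fun e => eVS e ∈ π) ∧ v ∈ e := by
      intro π hπ v
      obtain ⟨hπp, _⟩ := hPsys π hπ
      obtain ⟨A, ⟨hA, hvA⟩, hu⟩ := hπp.2 v
      obtain ⟨e, he, rfl⟩ := hstrong π hπ A hA
      refine ⟨e, ⟨Finset.mem_filter.mpr ⟨he, hA⟩, mem_eVS.mp hvA⟩, ?_⟩
      rintro e' ⟨he', hve'⟩
      rw [Finset.mem_filter] at he'
      have heq : eVS e' = eVS e := hu (eVS e') ⟨he'.2, mem_eVS.mpr hve'⟩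
      exact eVS_inj (hnd e' he'.1) heq
    -- P has exactly three partitions
    obtain ⟨v₀⟩ : Nonempty V := Fintype.card_pos_iff.mp (by omega)
    set p : Finset (Finset V) → Prop := fun σ => ∃ B ∈ σ, B.card = 2 ∧ v₀ ∈ B with hp
    have hSigcount : Multiset.countP p (G.edgeFinset.val.map fE) = 3 := by
      rw [Multiset.countP_map]
      have hfilter : G.edgeFinset.val.filter (fun e => p (fE e))
          = G.edgeFinset.val.filter (fun e => v₀ ∈ e) := by
        apply Multiset.filter_congr
        intro e he
        rw [Finset.mem_val] at he
        constructor
        · rintro ⟨B, hB, hB2, hv⟩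
          rcases Finset.mem_insert.mp hB with rfl | hB'
          · exact mem_eVS.mp hv
          · rw [Finset.mem_singleton] at hB'
            subst hB'
            exfalso
            rw [eVS_compl_card (hnd e he)] at hB2
            omega
        · intro hv
          exact ⟨eVS e, Finset.mem_insert_self _ _, eVS_card (hnd e he), mem_eVS.mpr hv⟩
      rw [hfilter]
      have : Multiset.card (G.edgeFinset.val.filter (fun e => v₀ ∈ e))
          = (G.edgeFinset.filter (fun e => v₀ ∈ e)).card := rfl
      rw [this, ← SimpleGraph.incidenceFinset_eq_filter,
        SimpleGraph.card_incidenceFinset_eq_degree]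
      exact hcubic v₀
    have hπcount : ∀ π ∈ P, Multiset.countP p (partitionSplits π) = 1 := by
      intro π hπ
      obtain ⟨hπp, _⟩ := hPsys π hπ
      rw [partitionSplits, Multiset.countP_map]
      have hiff : ∀ A ∈ π, (p ({A, Aᶜ} : Finset (Finset V)) ↔ v₀ ∈ A) := by
        intro A hA
        obtain ⟨e, he, rfl⟩ := hstrong π hπ A hA
        constructor
        · rintro ⟨B, hB, hB2, hv⟩
          rcases Finset.mem_insert.mp hB with rfl | hB'
          · exact hv
          · rw [Finset.mem_singleton] at hB'
            subst hB'
            exfalso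
            rw [eVS_compl_card (hnd e he)] at hB2
            omega
        · intro hv
          exact ⟨eVS e, Finset.mem_insert_self _ _, eVS_card (hnd e he), hv⟩
      obtain ⟨A₀, ⟨hA₀, hvA₀⟩, hu⟩ := hπp.2 v₀
      have hfs : π.filter (fun A => p ({A, Aᶜ} : Finset (Finset V))) = {A₀} := by
        ext C
        simp only [Finset.mem_filter, Finset.mem_singleton]
        constructor
        · rintro ⟨hC, hpC⟩
          exact hu C ⟨hC, (hiff C hC).mp hpC⟩
        · rintro rfl
          exact ⟨hA₀, (hiff _ hA₀).mpr hvA₀⟩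
      have : Multiset.card (π.val.filter (fun A => p ({A, Aᶜ} : Finset (Finset V))))
          = (π.filter (fun A => p ({A, Aᶜ} : Finset (Finset V)))).card := rfl
      rw [this, hfs, Finset.card_singleton]
    have hcardP : Multiset.card P = 3 := by
      have h1 : Multiset.countP p (systemSplits P) = Multiset.card P := by
        rw [systemSplits, countP_bind',
          Multiset.map_congr rfl (fun π hπ => hπcount π hπ)]
        simp
      rw [hPs, hSigcount] at h1
      omega
    obtain ⟨π₁, π₂, π₃, rfl⟩ := Multiset.card_eq_three.mp hcardP
    have hmem₁ : π₁ ∈ ({π₁, π₂, π₃} : Multiset (Finset (Finset V))) := by simp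
    have hmem₂ : π₂ ∈ ({π₁, π₂, π₃} : Multiset (Finset (Finset V))) := by simp
    have hmem₃ : π₃ ∈ ({π₁, π₂, π₃} : Multiset (Finset (Finset V))) := by simp
    -- multiplicity in each partition's splits
    have hcnt : ∀ (π : Finset (Finset V)) (e : Sym2 V),
        e ∈ G.edgeFinset.filter (fun e => eVS e ∈ π) →
        1 ≤ Multiset.count (fE e) (partitionSplits π) := by
      intro π e he
      rw [Finset.mem_filter] at he
      exact Multiset.one_le_count_iff_mem.mpr
        (Multiset.mem_map_of_mem _ (Finset.mem_val.mpr he.2))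
    have hsum : systemSplits ({π₁, π₂, π₃} : Multiset (Finset (Finset V)))
        = partitionSplits π₁ + (partitionSplits π₂ + partitionSplits π₃) := by
      simp [systemSplits, Multiset.insert_eq_cons, Multiset.cons_bind,
        Multiset.singleton_bind]
    have hdisjgen : ∀ (πa πb : Finset (Finset V)), ∀ e : Sym2 V,
        e ∈ G.edgeFinset.filter (fun e => eVS e ∈ πa) →
        e ∈ G.edgeFinset.filter (fun e => eVS e ∈ πb) →
        1 ≤ Multiset.count (fE e) (partitionSplits πa) ∧
        1 ≤ Multiset.count (fE e) (partitionSplits πb) :=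
      fun πa πb e ha hb => ⟨hcnt πa e ha, hcnt πb e hb⟩
    refine ⟨G.edgeFinset.filter (fun e => eVS e ∈ π₁),
      G.edgeFinset.filter (fun e => eVS e ∈ π₂),
      G.edgeFinset.filter (fun e => eVS e ∈ π₃), ?_, ?_, ?_, ?_,
      hmatch π₁ hmem₁, hmatch π₂ hmem₂, hmatch π₃ hmem₃⟩
    · -- union equals edge set
      apply Finset.Subset.antisymm
      · exact Finset.union_subset
          (Finset.union_subset (Finset.filter_subset _ _) (Finset.filter_subset _ _))
          (Finset.filter_subset _ _)
      · intro e he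
        have hmem : fE e ∈ systemSplits ({π₁, π₂, π₃} : Multiset (Finset (Finset V))) := by
          rw [hPs]
          exact Multiset.mem_map_of_mem _ (Finset.mem_val.mpr he)
        obtain ⟨π, hπ, hfeπ⟩ := Multiset.mem_bind.mp hmem
        obtain ⟨A, hA, hgA⟩ := Multiset.mem_map.mp hfeπ
        rw [Finset.mem_val] at hA
        have hAe : A = eVS e := by
          obtain ⟨e', he', rfl⟩ := hstrong π hπ A hA
          have hmm : eVS e ∈ ({eVS e', (eVS e')ᶜ} : Finset (Finset V)) := by
            rw [show ({eVS e', (eVS e')ᶜ} : Finset (Finset V))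
                = ({eVS e, (eVS e)ᶜ} : Finset (Finset V)) from hgA]
            exact Finset.mem_insert_self _ _
          rcases Finset.mem_insert.mp hmm with h | h
          · exact h.symm
          · exfalso
            rw [Finset.mem_singleton] at h
            have hc := eVS_card (hnd e he)
            rw [h, eVS_compl_card (hnd e' he')] at hc
            omega
        rw [hAe] at hA
        have heM : e ∈ G.edgeFinset.filter (fun e => eVS e ∈ π) :=
          Finset.mem_filter.mpr ⟨he, hA⟩
        rcases Multiset.mem_cons.mp hπ with rfl | hπ'
        · exact Finset.mem_union_left _ (Finset.mem_union_left _ heM)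
        rcases Multiset.mem_cons.mp hπ' with rfl | hπ''
        · exact Finset.mem_union_left _ (Finset.mem_union_right _ heM)
        rw [Multiset.mem_singleton] at hπ''
        subst hπ''
        exact Finset.mem_union_right _ heM
    · -- Disjoint M₁ M₂
      refine Finset.disjoint_left.mpr ?_
      intro e he1 he2
      obtain ⟨c1, c2⟩ := hdisjgen π₁ π₂ e he1 he2
      have h2 : 2 ≤ Multiset.count (fE e)
          (systemSplits ({π₁, π₂, π₃} : Multiset (Finset (Finset V)))) := by
        rw [hsum]
        simp only [Multiset.count_add]
        omega
      rw [hPs] at h2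
      have := hcount1 (fE e)
      omega
    · -- Disjoint M₁ M₃
      refine Finset.disjoint_left.mpr ?_
      intro e he1 he2
      obtain ⟨c1, c2⟩ := hdisjgen π₁ π₃ e he1 he2
      have h2 : 2 ≤ Multiset.count (fE e)
          (systemSplits ({π₁, π₂, π₃} : Multiset (Finset (Finset V)))) := by
        rw [hsum]
        simp only [Multiset.count_add]
        omega
      rw [hPs] at h2
      have := hcount1 (fE e)
      omega
    · -- Disjoint M₂ M₃
      refine Finset.disjoint_left.mpr ?_
      intro e he1 he2
      obtain ⟨c1, c2⟩ := hdisjgen π₂ π₃ e he1 he2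
      have h2 : 2 ≤ Multiset.count (fE e)
          (systemSplits ({π₁, π₂, π₃} : Multiset (Finset (Finset V)))) := by
        rw [hsum]
        simp only [Multiset.count_add]
        omega
      rw [hPs] at h2
      have := hcount1 (fE e)
      omega
  · rintro ⟨M₁, M₂, M₃, hU, h12, h13, h23, hm₁, hm₂, hm₃⟩
    have hsubU : M₁ ∪ M₂ ∪ M₃ ⊆ G.edgeFinset := le_of_eq hU
    have hs₁ : M₁ ⊆ G.edgeFinset :=
      (Finset.subset_union_left.trans Finset.subset_union_left).trans hsubU
    have hs₂ : M₂ ⊆ G.edgeFinset :=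
      (Finset.subset_union_right.trans Finset.subset_union_left).trans hsubU
    have hs₃ : M₃ ⊆ G.edgeFinset := Finset.subset_union_right.trans hsubU
    have key : ∀ M : Finset (Sym2 V), M ⊆ G.edgeFinset →
        (∀ v : V, ∃! e : Sym2 V, e ∈ M ∧ v ∈ e) →
        (IsPartition (M.image eVS) ∧ 2 ≤ (M.image eVS).card) ∧
          partitionSplits (M.image eVS) = M.val.map fE := by
      intro M hMsub hM
      have hinj : Set.InjOn eVS ↑M := fun e₁ h₁ e₂ _ h =>
        eVS_inj (hnd e₁ (hMsub h₁)) h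
      have hpar : IsPartition (M.image eVS) := by
        constructor
        · intro A hA
          obtain ⟨e, he, rfl⟩ := Finset.mem_image.mp hA
          have := eVS_card (hnd e (hMsub he))
          exact Finset.card_pos.mp (by omega)
        · intro x
          obtain ⟨e, ⟨heM, hxe⟩, hu⟩ := hM x
          refine ⟨eVS e, ⟨Finset.mem_image_of_mem _ heM, mem_eVS.mpr hxe⟩, ?_⟩
          rintro A ⟨hA, hxA⟩
          obtain ⟨e', he', rfl⟩ := Finset.mem_image.mp hA
          rw [hu e' ⟨he', mem_eVS.mp hxA⟩]
      refine ⟨⟨hpar, ?_⟩, ?_⟩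
      · -- at least two parts
        have hne : Nonempty V := Fintype.card_pos_iff.mp (by omega)
        obtain ⟨x⟩ := hne
        obtain ⟨A, ⟨hA, hxA⟩, _⟩ := hpar.2 x
        have hA2 : A.card = 2 := by
          obtain ⟨e, he, rfl⟩ := Finset.mem_image.mp hA
          exact eVS_card (hnd e (hMsub he))
        have : ∃ y : V, y ∉ A := by
          by_contra hc
          push_neg at hc
          have : Finset.univ ⊆ A := fun y _ => hc y
          have := Finset.card_le_card this
          simp only [Finset.card_univ] at this
          omega
        obtain ⟨y, hy⟩ := this
        obtain ⟨B, ⟨hB, hyB⟩, _⟩ := hpar.2 y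
        refine Finset.one_lt_card.mpr ⟨A, hA, B, hB, ?_⟩
        rintro rfl; exact hy hyB
      · -- splits of the partition
        rw [partitionSplits, Finset.image_val_of_injOn hinj, Multiset.map_map]
        rfl
    obtain ⟨⟨hp₁, hc₁⟩, hsp₁⟩ := key M₁ hs₁ hm₁
    obtain ⟨⟨hp₂, hc₂⟩, hsp₂⟩ := key M₂ hs₂ hm₂
    obtain ⟨⟨hp₃, hc₃⟩, hsp₃⟩ := key M₃ hs₃ hm₃
    refine ⟨{M₁.image eVS, M₂.image eVS, M₃.image eVS}, ?_, ?_⟩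
    · intro π hπ
      rcases Multiset.mem_cons.mp hπ with rfl | hπ
      · exact ⟨hp₁, hc₁⟩
      rcases Multiset.mem_cons.mp hπ with rfl | hπ
      · exact ⟨hp₂, hc₂⟩
      rw [Multiset.mem_singleton] at hπ
      subst hπ
      exact ⟨hp₃, hc₃⟩
    · have hval : G.edgeFinset.val = M₁.val + (M₂.val + M₃.val) := by
        have hd : Disjoint M₁ (M₂ ∪ M₃) := Finset.disjoint_union_right.mpr ⟨h12, h13⟩
        have : G.edgeFinset = M₁.disjUnion (M₂.disjUnion M₃ h23) (by
            rwa [Finset.disjUnion_eq_union]) := by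
          rw [Finset.disjUnion_eq_union, Finset.disjUnion_eq_union, ← Finset.union_assoc, hU]
        rw [this]; rfl
      show systemSplits _ = G.edgeFinset.val.map fE
      rw [hval, Multiset.map_add, Multiset.map_add]
      simp only [systemSplits, Multiset.insert_eq_cons, Multiset.cons_bind,
        Multiset.singleton_bind]
      rw [hsp₁, hsp₂, hsp₃]
end
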